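/- Let (V, ω) be a real symplectic vector space, W a finite-dimensional real vector space, and A : W × W → End(V) an alternating bilinear map all of whose values are ω-symmetric endomorphisms of V. If q is an odd natural number, then the alternatization of the 2q-linear form (w₁, …, w_{2q}) ↦ tr(A(w₁, w₂) ∘ A(w₃, w₄) ∘ ⋯ ∘ A(w_{2q−1}, w_{2q})) on W is identically zero. -/

import Mathlib

open Module LinearMap

private def pairEquiv (q : ℕ) : Fin q × Fin 2 ≃ Fin (2 * q) where
  toFun x := ⟨2 * x.1.val + x.2.val, by have := x.1.isLt; have := x.2.isLt; omega⟩
  invFun x := (⟨x.val / 2, by have := x.isLt; omega⟩, ⟨x.val % 2, by omega⟩)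
  left_inv x := by
    ext
    · simp only []; omega
    · simp only []; omega
  right_inv x := by
    ext
    simp only []
    omega

private lemma ofFn_rev {α : Type*} {n : ℕ} (g : Fin n → α) :
    List.ofFn (fun i => g i.rev) = (List.ofFn g).reverse := by
  apply List.ext_getElem
  · simp
  · intro i h1 h2
    simp only [List.getElem_ofFn, List.getElem_reverse, List.length_ofFn] at *
    congr 1
    ext
    simp [Fin.rev]
    omega

private lemma mapT (R V : Type*) [CommRing R] [AddCommGroup V] [Module R V]
    (l : List (Module.End R V)) :
    (l.map (fun S => Module.Dual.transpose (R := R) S)).prod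
      = Module.Dual.transpose (R := R) l.reverse.prod := by
  induction l with
  | nil => exact LinearMap.ext fun φ => rfl
  | cons S l ih =>
      simp only [List.map_cons, List.prod_cons, List.reverse_cons, List.prod_append,
        List.prod_cons, List.prod_nil, mul_one, ih]
      rw [Module.End.mul_eq_comp, Module.End.mul_eq_comp, Module.Dual.transpose_comp]

private lemma trace_rev (V : Type*) [AddCommGroup V] [Module ℝ V] [FiniteDimensional ℝ V]
    (ω : V →ₗ[ℝ] V →ₗ[ℝ] ℝ)
    (halt : ∀ x, ω x x = 0)
    (hnd : ∀ x, (∀ y, ω x y = 0) → x = 0)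
    (l : List (Module.End ℝ V))
    (hl : ∀ S ∈ l, ∀ u v, ω (S u) v = ω (S v) u) :
    LinearMap.trace ℝ V l.prod
      = (-1 : ℝ) ^ l.length * LinearMap.trace ℝ V l.reverse.prod := by
  have hskew : ∀ x y, ω x y = - ω y x := by
    intro x y
    have h := halt (x + y)
    simp only [map_add, LinearMap.add_apply, halt] at h
    linarith
  have hinj : Function.Injective ω := by
    intro a b hab
    have h0 : a - b = 0 := hnd _ (fun y => by simp [map_sub, hab])
    exact sub_eq_zero.mp h0
  have hrank : Module.finrank ℝ V = Module.finrank ℝ (Module.Dual ℝ V) :=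
    (Subspace.dual_finrank_eq).symm
  set e : V ≃ₗ[ℝ] Module.Dual ℝ V := LinearMap.linearEquivOfInjective ω hinj hrank with he
  have heapp : ∀ x, e x = ω x := fun x => rfl
  -- conjugation of a single symmetric operator
  have hconj : ∀ S : Module.End ℝ V, (∀ u v, ω (S u) v = ω (S v) u) →
      e.conj S = -(Module.Dual.transpose (R := ℝ) S) := by
    intro S hS
    apply LinearMap.ext; intro φ
    apply LinearMap.ext; intro v
    have h1 : e.conj S φ v = ω (S (e.symm φ)) v := by
      rw [LinearEquiv.conj_apply_apply, heapp]
    have h2 : (ω (e.symm φ)) (S v) = φ (S v) := by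
      rw [← heapp, e.apply_symm_apply]
    rw [h1, hS, hskew, h2]
    rfl
  -- conjugation of the whole product
  have hprod : ∀ l : List (Module.End ℝ V), (∀ S ∈ l, ∀ u v, ω (S u) v = ω (S v) u) →
      e.conj l.prod = ((-1 : ℝ) ^ l.length) •
        (l.map (fun S => Module.Dual.transpose (R := ℝ) S)).prod := by
    intro l
    induction l with
    | nil =>
        intro _
        simp only [List.prod_nil, List.map_nil, List.length_nil, pow_zero, one_smul]
        exact e.conj_id
    | cons S t ih =>
        intro hmem
        have hS := hmem S List.mem_cons_self
        have ht := ih (fun T hT => hmem T (List.mem_cons_of_mem _ hT))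
        simp only [List.prod_cons, List.map_cons, List.length_cons]
        rw [Module.End.mul_eq_comp, LinearEquiv.conj_comp, ht, hconj S hS]
        rw [LinearMap.comp_smul, LinearMap.neg_comp, ← Module.End.mul_eq_comp, pow_succ,
          mul_comm, mul_smul]
        module
  have key := hprod l hl
  have htr : LinearMap.trace ℝ V l.prod
      = LinearMap.trace ℝ (Module.Dual ℝ V) (e.conj l.prod) :=
    (LinearMap.trace_conj' l.prod e).symm
  rw [htr, key, map_smul, smul_eq_mul, mapT, LinearMap.trace_transpose']


/-- If A : W × W → End(V) is an alternating bilinear map whose values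
are ω-symmetric endomorphisms of a real symplectic vector space (V, ω), and q is odd,
then the alternatization of the 2q-linear form
(w₁, …, w_{2q}) ↦ tr(A(w₁,w₂) ∘ ⋯ ∘ A(w_{2q−1},w_{2q})) on W vanishes identically. -/
theorem statement_2 (V W : Type*) [AddCommGroup V] [Module ℝ V] [FiniteDimensional ℝ V]
    [AddCommGroup W] [Module ℝ W] [FiniteDimensional ℝ W]
    (ω : V →ₗ[ℝ] V →ₗ[ℝ] ℝ)
    (halt : ∀ x, ω x x = 0)
    (hnd : ∀ x, (∀ y, ω x y = 0) → x = 0)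
    (A : W →ₗ[ℝ] W →ₗ[ℝ] Module.End ℝ V)
    (hAalt : ∀ w, A w w = 0)
    (hAsym : ∀ w₁ w₂ u v, ω (A w₁ w₂ u) v = ω (A w₁ w₂ v) u)
    (q : ℕ) (hq : Odd q) (w : Fin (2 * q) → W) :
    ∑ σ : Equiv.Perm (Fin (2 * q)), ((Equiv.Perm.sign σ : ℤ) : ℝ) *
      LinearMap.trace ℝ V
        (List.ofFn (fun i : Fin q =>
          A (w (σ ⟨2 * i.val, by have := i.isLt; omega⟩))
            (w (σ ⟨2 * i.val + 1, by have := i.isLt; omega⟩)))).prod = 0 := by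
  classical
  set ρ' : Equiv.Perm (Fin q × Fin 2) :=
    Equiv.prodCongrLeft (fun _ : Fin 2 => (Fin.revPerm : Equiv.Perm (Fin q))) with hρ'
  set ρ : Equiv.Perm (Fin (2 * q)) := (pairEquiv q).permCongr ρ' with hρdef
  have hρ : ∀ (k c : ℕ) (hk : k < q) (hc : c < 2) (h : 2 * k + c < 2 * q),
      ρ ⟨2 * k + c, h⟩ = ⟨2 * (q - 1 - k) + c, by omega⟩ := by
    intro k c hk hc h
    have : ρ ⟨2 * k + c, h⟩ = (pairEquiv q) (ρ' ((pairEquiv q).symm ⟨2 * k + c, h⟩)) := rfl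
    rw [this]
    ext
    simp only [pairEquiv, hρ', Equiv.coe_fn_symm_mk, Equiv.prodCongrLeft_apply,
      Fin.revPerm_apply, Fin.rev, Equiv.coe_fn_mk]
    omega
  have hsignρ : Equiv.Perm.sign ρ = 1 := by
    rw [hρdef, Equiv.Perm.sign_permCongr, hρ', Equiv.Perm.sign_prodCongrLeft,
      Fin.prod_univ_two, Int.units_mul_self]
  set F : Equiv.Perm (Fin (2 * q)) → ℝ := fun σ => ((Equiv.Perm.sign σ : ℤ) : ℝ) *
      LinearMap.trace ℝ V
        (List.ofFn (fun i : Fin q =>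
          A (w (σ ⟨2 * i.val, by have := i.isLt; omega⟩))
            (w (σ ⟨2 * i.val + 1, by have := i.isLt; omega⟩)))).prod with hF
  show ∑ σ, F σ = 0
  have hflip : ∀ σ : Equiv.Perm (Fin (2 * q)), F (σ * ρ) = - F σ := by
    intro σ
    have hlist : (List.ofFn (fun i : Fin q =>
          A (w ((σ * ρ) ⟨2 * i.val, by have := i.isLt; omega⟩))
            (w ((σ * ρ) ⟨2 * i.val + 1, by have := i.isLt; omega⟩))))
        = (List.ofFn (fun i : Fin q =>
          A (w (σ ⟨2 * i.val, by have := i.isLt; omega⟩))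
            (w (σ ⟨2 * i.val + 1, by have := i.isLt; omega⟩)))).reverse := by
      rw [← ofFn_rev]
      have hρ0 : ∀ (k : ℕ) (hk : k < q) (h : 2 * k < 2 * q),
          ρ ⟨2 * k, h⟩ = ⟨2 * (q - 1 - k), by omega⟩ :=
        fun k hk h => hρ k 0 hk (by omega) (by omega)
      have hρ1 : ∀ (k : ℕ) (hk : k < q) (h : 2 * k + 1 < 2 * q),
          ρ ⟨2 * k + 1, h⟩ = ⟨2 * (q - 1 - k) + 1, by omega⟩ :=
        fun k hk h => hρ k 1 hk (by omega) (by omega)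
      congr 1
      funext i
      have hrev : (Fin.rev i).val = q - 1 - i.val := by
        rw [Fin.val_rev]; omega
      have h0 : (σ * ρ) ⟨2 * i.val, by have := i.isLt; omega⟩
          = σ ⟨2 * (Fin.rev i).val, by have := (Fin.rev i).isLt; omega⟩ := by
        rw [Equiv.Perm.mul_apply, hρ0 i.val i.isLt (by have := i.isLt; omega)]
        congr 1
        ext
        simp only [Fin.val_rev]
        omega
      have h1 : (σ * ρ) ⟨2 * i.val + 1, by have := i.isLt; omega⟩
          = σ ⟨2 * (Fin.rev i).val + 1, by have := (Fin.rev i).isLt; omega⟩ := by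
        rw [Equiv.Perm.mul_apply, hρ1 i.val i.isLt (by have := i.isLt; omega)]
        congr 1
        ext
        simp only [Fin.val_rev]
        omega
      rw [h0, h1]
    have htr := trace_rev V ω halt hnd
      (List.ofFn (fun i : Fin q =>
          A (w (σ ⟨2 * i.val, by have := i.isLt; omega⟩))
            (w (σ ⟨2 * i.val + 1, by have := i.isLt; omega⟩))))
      (by
        intro S hS u v
        rw [List.mem_ofFn] at hS
        obtain ⟨i, rfl⟩ := hS
        exact hAsym _ _ u v)
    rw [List.length_ofFn, Odd.neg_one_pow hq] at htr
    have hsign : ((Equiv.Perm.sign (σ * ρ) : ℤ) : ℝ) = ((Equiv.Perm.sign σ : ℤ) : ℝ) := by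
      rw [map_mul, hsignρ, mul_one]
    simp only [hF, hlist, hsign]
    rw [show LinearMap.trace ℝ V (List.ofFn (fun i : Fin q =>
          A (w (σ ⟨2 * i.val, by have := i.isLt; omega⟩))
            (w (σ ⟨2 * i.val + 1, by have := i.isLt; omega⟩)))).reverse.prod
        = - LinearMap.trace ℝ V (List.ofFn (fun i : Fin q =>
          A (w (σ ⟨2 * i.val, by have := i.isLt; omega⟩))
            (w (σ ⟨2 * i.val + 1, by have := i.isLt; omega⟩)))).prod from by
      rw [htr]; ring]
    ring
  have hsum : ∑ σ, F σ = ∑ σ, F (σ * ρ) :=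
    (Equiv.sum_comp (Equiv.mulRight ρ) F).symm
  have hneg : ∑ σ, F σ = - ∑ σ, F σ := by
    calc ∑ σ, F σ = ∑ σ, F (σ * ρ) := hsum
    _ = ∑ σ, - F σ := Finset.sum_congr rfl (fun σ _ => hflip σ)
    _ = - ∑ σ, F σ := by simp
  linarith
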